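/- arXiv:2310.17635 — 3 statements merged into one kernel-verified Lean document; each statement's English description precedes it below -/
import Mathlib

section
/- Fix d > 0. Let ℓ = ⌊(log n)²⌋ and let B be an n×n random matrix with independent {0,1}-entries where B_{ij} = 1 with probability d/n if max(i,j) ≤ n−ℓ and with probability √(log n)/n otherwise. Then for every η > 0 there exists N such that for all n ≥ N, with probability at least 1 − n^{−1+η} the following holds: for every subset S ⊆ [n] with |S| ≤ √(log n), one has Σ_{i,j ∈ S} B_{ij} ≤ |S|. -/
open MeasureTheory

/-- The Bernoulli measure on `ℝ`, putting mass `p` at `1` and mass `1 - p` at `0`. -/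
noncomputable def bernoulliR (p : ℝ) : Measure ℝ :=
  ENNReal.ofReal p • Measure.dirac 1 + ENNReal.ofReal (1 - p) • Measure.dirac 0

/-- The law of the matrix `B`: independent entries, equal to `1` with probability `d/n`
if `max(i,j) ≤ n - ℓ` (with `ℓ = ⌊(log n)²⌋`, indices `1`-based) and with probability
`√(log n)/n` otherwise. -/
noncomputable def lawB (n : ℕ) (d : ℝ) : Measure (Fin n → Fin n → ℝ) :=
  Measure.pi fun i => Measure.pi fun j =>
    if (i : ℕ) + 1 ≤ n - ⌊(Real.log n) ^ 2⌋₊ ∧ (j : ℕ) + 1 ≤ n - ⌊(Real.log n) ^ 2⌋₊ then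
      bernoulliR (d / n)
    else bernoulliR (Real.sqrt (Real.log n) / n)

open Filter
open scoped ENNReal


lemma bern_one (p : ℝ) : bernoulliR p {1} = ENNReal.ofReal p := by
  simp [bernoulliR, Measure.dirac_apply' _ (measurableSet_singleton (1:ℝ))]

lemma bern_univ {p : ℝ} (h0 : 0 ≤ p) (h1 : p ≤ 1) : bernoulliR p Set.univ = 1 := by
  simp only [bernoulliR, Measure.add_apply, Measure.smul_apply, smul_eq_mul]
  rw [Measure.dirac_apply_of_mem (Set.mem_univ _), Measure.dirac_apply_of_mem (Set.mem_univ _)]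
  rw [mul_one, mul_one, ← ENNReal.ofReal_add h0 (by linarith)]
  simp

lemma bern_01 {p : ℝ} (h0 : 0 ≤ p) (h1 : p ≤ 1) : bernoulliR p {0, 1} = 1 := by
  have hm : MeasurableSet ({0,1} : Set ℝ) := by measurability
  simp only [bernoulliR, Measure.add_apply, Measure.smul_apply, smul_eq_mul,
    Measure.dirac_apply' _ hm]
  rw [Set.indicator_of_mem (by simp : (1:ℝ) ∈ ({0,1}:Set ℝ)),
    Set.indicator_of_mem (by simp : (0:ℝ) ∈ ({0,1}:Set ℝ))]
  simp only [Pi.one_apply, mul_one]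
  rw [← ENNReal.ofReal_add h0 (by linarith)]
  simp

lemma bern_prob {p : ℝ} (h0 : 0 ≤ p) (h1 : p ≤ 1) : IsProbabilityMeasure (bernoulliR p) :=
  ⟨bern_univ h0 h1⟩

lemma event_ones_le {n : ℕ} (P : Fin n → Fin n → ℝ) (hP0 : ∀ i j, 0 ≤ P i j)
    (hP1 : ∀ i j, P i j ≤ 1) (q : ℝ) (hq : ∀ i j, P i j ≤ q) (T : Finset (Fin n × Fin n)) :
    (Measure.pi fun i => Measure.pi fun j => bernoulliR (P i j))
      {A | ∀ t ∈ T, A t.1 t.2 = 1} ≤ (ENNReal.ofReal q) ^ T.card := by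
  classical
  haveI : ∀ i j, IsProbabilityMeasure (bernoulliR (P i j)) :=
    fun i j => bern_prob (hP0 i j) (hP1 i j)
  have hset : {A : Fin n → Fin n → ℝ | ∀ t ∈ T, A t.1 t.2 = 1} =
      Set.pi Set.univ (fun i => Set.pi Set.univ
        (fun j => if (i, j) ∈ T then ({1} : Set ℝ) else Set.univ)) := by
    ext A
    simp only [Set.mem_setOf_eq, Set.mem_pi, Set.mem_univ, true_implies]
    constructor
    · intro h i j
      split_ifs with ht
      · exact h (i, j) ht
      · trivial
    · intro h t htT
      have := h t.1 t.2
      rwa [if_pos htT, Set.mem_singleton_iff] at this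
  rw [hset, Measure.pi_pi]
  have hstep1 : ∀ i, (Measure.pi fun j => bernoulliR (P i j))
      (Set.pi Set.univ (fun j => if (i, j) ∈ T then ({1} : Set ℝ) else Set.univ)) =
      ∏ j, (if (i, j) ∈ T then ENNReal.ofReal (P i j) else 1) := by
    intro i
    rw [Measure.pi_pi]
    refine Finset.prod_congr rfl fun j _ => ?_
    split_ifs with ht
    · exact bern_one _
    · exact bern_univ (hP0 i j) (hP1 i j)
  rw [Finset.prod_congr rfl fun i _ => hstep1 i]
  have hstep2 : ∀ i : Fin n, ∏ j, (if (i, j) ∈ T then ENNReal.ofReal (P i j) else 1) ≤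
      ∏ j, (if (i, j) ∈ T then ENNReal.ofReal q else 1) := by
    intro i
    refine Finset.prod_le_prod' fun j _ => ?_
    split_ifs with ht
    · exact ENNReal.ofReal_le_ofReal (hq i j)
    · exact le_rfl
  refine le_trans (Finset.prod_le_prod' fun i _ => hstep2 i) (le_of_eq ?_)
  rw [← Finset.prod_product']
  rw [show (Finset.univ : Finset (Fin n)) ×ˢ (Finset.univ : Finset (Fin n)) =
    (Finset.univ : Finset (Fin n × Fin n)) from Finset.univ_product_univ]
  rw [Finset.prod_ite_mem Finset.univ T (fun _ => ENNReal.ofReal q), Finset.univ_inter,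
    Finset.prod_const]

lemma support_01 {n : ℕ} (P : Fin n → Fin n → ℝ) (hP0 : ∀ i j, 0 ≤ P i j)
    (hP1 : ∀ i j, P i j ≤ 1) :
    (Measure.pi fun i => Measure.pi fun j => bernoulliR (P i j))
      {A | ∀ i j, A i j = 0 ∨ A i j = 1}ᶜ = 0 := by
  haveI : ∀ i j, IsProbabilityMeasure (bernoulliR (P i j)) :=
    fun i j => bern_prob (hP0 i j) (hP1 i j)
  haveI : ∀ i, IsProbabilityMeasure (Measure.pi fun j => bernoulliR (P i j)) :=
    fun i => inferInstance
  haveI : IsProbabilityMeasure (Measure.pi fun i => Measure.pi fun j => bernoulliR (P i j)) :=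
    inferInstance
  have hset : {A : Fin n → Fin n → ℝ | ∀ i j, A i j = 0 ∨ A i j = 1} =
      Set.pi Set.univ (fun i => Set.pi Set.univ (fun _ => ({0, 1} : Set ℝ))) := by
    ext A
    simp [Set.mem_pi]
  have hmeas : MeasurableSet {A : Fin n → Fin n → ℝ | ∀ i j, A i j = 0 ∨ A i j = 1} := by
    rw [hset]
    exact MeasurableSet.univ_pi fun i => MeasurableSet.univ_pi fun j => by measurability
  have hone : (Measure.pi fun i => Measure.pi fun j => bernoulliR (P i j))
      {A | ∀ i j, A i j = 0 ∨ A i j = 1} = 1 := by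
    rw [hset, Measure.pi_pi]
    have : ∀ i, (Measure.pi fun j => bernoulliR (P i j))
        (Set.pi Set.univ (fun _ => ({0, 1} : Set ℝ))) = 1 := by
      intro i
      rw [Measure.pi_pi]
      rw [Finset.prod_congr rfl fun j _ => bern_01 (hP0 i j) (hP1 i j)]
      simp
    rw [Finset.prod_congr rfl fun i _ => this i]
    simp
  rw [measure_compl hmeas (by simp), hone, measure_univ, tsub_self]

lemma bad_le {n : ℕ} (P : Fin n → Fin n → ℝ) (hP0 : ∀ i j, 0 ≤ P i j)
    (hP1 : ∀ i j, P i j ≤ 1) (q : ℝ) (hq0 : 0 ≤ q) (hq : ∀ i j, P i j ≤ q)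
    (s : ℝ) (c : ℝ)
    (hc : ∀ k ≤ ⌊s⌋₊, (n.choose k : ℝ) * ((k * k).choose (k + 1) : ℝ) * q ^ (k + 1) ≤ c) :
    (Measure.pi fun i => Measure.pi fun j => bernoulliR (P i j))
      {A | ∀ S : Finset (Fin n), (S.card : ℝ) ≤ s →
        (∑ i ∈ S, ∑ j ∈ S, A i j) ≤ (S.card : ℝ)}ᶜ ≤
      (⌊s⌋₊ + 1) * ENNReal.ofReal c := by
  classical
  set μ := (Measure.pi fun i => Measure.pi fun j => bernoulliR (P i j)) with hμ
  set K := ⌊s⌋₊ with hK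
  set G : Set (Fin n → Fin n → ℝ) := {A | ∀ i j, A i j = 0 ∨ A i j = 1} with hG
  set Bad : Set (Fin n → Fin n → ℝ) :=
    {A | ∀ S : Finset (Fin n), (S.card : ℝ) ≤ s →
      (∑ i ∈ S, ∑ j ∈ S, A i j) ≤ (S.card : ℝ)}ᶜ with hBad
  set 𝒮 : Finset (Finset (Fin n)) := Finset.univ.filter (fun S => S.card ≤ K) with h𝒮
  set E : Finset (Fin n × Fin n) → Set (Fin n → Fin n → ℝ) :=
    fun T => {A | ∀ t ∈ T, A t.1 t.2 = 1} with hE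
  -- inclusion
  have hsub : Bad ∩ G ⊆ ⋃ S ∈ 𝒮, ⋃ T ∈ Finset.powersetCard (S.card + 1) (S ×ˢ S), E T := by
    rintro A ⟨hAbad, hAG⟩
    simp only [hBad, Set.mem_compl_iff, Set.mem_setOf_eq, not_forall] at hAbad
    obtain ⟨S, hScard, hSsum⟩ := hAbad
    push_neg at hSsum
    set T0 : Finset (Fin n × Fin n) := (S ×ˢ S).filter (fun t => A t.1 t.2 = 1) with hT0
    have hsum : (∑ i ∈ S, ∑ j ∈ S, A i j) = (T0.card : ℝ) := by
      rw [← Finset.sum_product']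
      rw [← Finset.sum_filter_of_ne (p := fun t => A t.1 t.2 = 1)
        (fun t _ hne => ((hAG t.1 t.2).resolve_left hne))]
      rw [Finset.sum_congr rfl (fun t ht => (Finset.mem_filter.mp ht).2)]
      simp [hT0]
    have hlt : S.card < T0.card := by
      rw [hsum] at hSsum
      exact_mod_cast hSsum
    obtain ⟨T, hTsub, hTcard⟩ := Finset.exists_subset_card_eq hlt
    have hS𝒮 : S ∈ 𝒮 := by
      simp only [h𝒮, Finset.mem_filter, Finset.mem_univ, true_and]
      exact Nat.le_floor hScard
    have hTpow : T ∈ Finset.powersetCard (S.card + 1) (S ×ˢ S) := by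
      rw [Finset.mem_powersetCard]
      exact ⟨hTsub.trans (Finset.filter_subset _ _), hTcard⟩
    have hAE : A ∈ E T := by
      intro t ht
      exact (Finset.mem_filter.mp (hTsub ht)).2
    exact Set.mem_biUnion hS𝒮 (Set.mem_biUnion hTpow hAE)
  -- measure bound
  have hμBad : μ Bad ≤ μ (Bad ∩ G) + μ (Bad \ G) := measure_le_inter_add_diff μ Bad G
  have hdiff : μ (Bad \ G) = 0 :=
    measure_mono_null (fun A hA => hA.2) (support_01 P hP0 hP1)
  have hmain : μ (Bad ∩ G) ≤
      ∑ S ∈ 𝒮, ((S.card * S.card).choose (S.card + 1) : ℝ≥0∞) *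
        (ENNReal.ofReal q) ^ (S.card + 1) := by
    refine le_trans (measure_mono hsub) ?_
    refine le_trans (measure_biUnion_finset_le _ _) ?_
    refine Finset.sum_le_sum fun S _ => ?_
    refine le_trans (measure_biUnion_finset_le _ _) ?_
    have : ∀ T ∈ Finset.powersetCard (S.card + 1) (S ×ˢ S),
        μ (E T) ≤ (ENNReal.ofReal q) ^ (S.card + 1) := by
      intro T hT
      have := event_ones_le P hP0 hP1 q hq T
      rwa [(Finset.mem_powersetCard.mp hT).2] at this
    refine le_trans (Finset.sum_le_sum this) ?_
    rw [Finset.sum_const, Finset.card_powersetCard, Finset.card_product]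
    rw [nsmul_eq_mul]
  -- grouping by cardinality
  have hgroup : ∑ S ∈ 𝒮, ((S.card * S.card).choose (S.card + 1) : ℝ≥0∞) *
      (ENNReal.ofReal q) ^ (S.card + 1) ≤ (K + 1) * ENNReal.ofReal c := by
    have e1 : ∑ S ∈ 𝒮, ((S.card * S.card).choose (S.card + 1) : ℝ≥0∞) *
        (ENNReal.ofReal q) ^ (S.card + 1) =
        ∑ S ∈ (Finset.univ : Finset (Fin n)).powerset,
          (if S.card ≤ K then ((S.card * S.card).choose (S.card + 1) : ℝ≥0∞) *
            (ENNReal.ofReal q) ^ (S.card + 1) else 0) := by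
      rw [h𝒮, ← Finset.powerset_univ, Finset.sum_filter]
    rw [e1, Finset.sum_powerset]
    have e2 : ∀ j ∈ Finset.range ((Finset.univ : Finset (Fin n)).card + 1),
        (∑ S ∈ Finset.powersetCard j (Finset.univ : Finset (Fin n)),
          (if S.card ≤ K then ((S.card * S.card).choose (S.card + 1) : ℝ≥0∞) *
            (ENNReal.ofReal q) ^ (S.card + 1) else 0)) ≤
        (if j ≤ K then ENNReal.ofReal c else 0) := by
      intro j hj
      have hcards : ∀ S ∈ Finset.powersetCard j (Finset.univ : Finset (Fin n)),
          (if S.card ≤ K then ((S.card * S.card).choose (S.card + 1) : ℝ≥0∞) *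
            (ENNReal.ofReal q) ^ (S.card + 1) else 0) =
          (if j ≤ K then ((j * j).choose (j + 1) : ℝ≥0∞) *
            (ENNReal.ofReal q) ^ (j + 1) else 0) := by
        intro S hS
        rw [(Finset.mem_powersetCard.mp hS).2]
      rw [Finset.sum_congr rfl hcards, Finset.sum_const, Finset.card_powersetCard,
        Finset.card_univ, Fintype.card_fin]
      split_ifs with hjK
      · rw [nsmul_eq_mul]
        rw [← ENNReal.ofReal_natCast (n.choose j),
          ← ENNReal.ofReal_natCast ((j * j).choose (j + 1)), ← ENNReal.ofReal_pow hq0,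
          ← ENNReal.ofReal_mul (by positivity), ← ENNReal.ofReal_mul (by positivity)]
        exact ENNReal.ofReal_le_ofReal (by rw [← mul_assoc]; exact hc j hjK)
      · simp
    refine le_trans (Finset.sum_le_sum e2) ?_
    rw [← Finset.sum_filter, Finset.sum_const]
    have hcard : (Finset.filter (fun j => j ≤ K) (Finset.range
        ((Finset.univ : Finset (Fin n)).card + 1))).card ≤ K + 1 := by
      refine le_trans (Finset.card_le_card ?_) (le_of_eq (Finset.card_range (K + 1)))
      intro j hj
      simp only [Finset.mem_filter, Finset.mem_range] at hj ⊢
      omega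
    rw [nsmul_eq_mul]
    refine mul_le_mul' ?_ le_rfl
    calc ((Finset.filter (fun j => j ≤ K) (Finset.range
        ((Finset.univ : Finset (Fin n)).card + 1))).card : ℝ≥0∞) ≤ ((K + 1 : ℕ) : ℝ≥0∞) := by
          exact_mod_cast Nat.cast_le.mpr hcard
      _ = (K : ℝ≥0∞) + 1 := by push_cast; ring
  calc μ Bad ≤ μ (Bad ∩ G) + μ (Bad \ G) := hμBad
    _ = μ (Bad ∩ G) := by rw [hdiff, add_zero]
    _ ≤ _ := le_trans hmain hgroup

set_option maxHeartbeats 1000000 in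
lemma eventually_count (d η : ℝ) (hη : 0 < η) :
    ∀ᶠ n : ℕ in atTop, 3 ≤ n ∧ d ≤ Real.sqrt (Real.log n) ∧
      ((⌊Real.sqrt (Real.log n)⌋₊ : ℝ) + 1) *
        (Real.log n) ^ (2 * ⌊Real.sqrt (Real.log n)⌋₊ + 2) ≤ (n : ℝ) ^ η := by
  have hlog : Tendsto (fun n : ℕ => Real.log n) atTop atTop :=
    Real.tendsto_log_atTop.comp tendsto_natCast_atTop_atTop
  set w : ℝ := 20 / η with hw
  have hw0 : 0 ≤ w := by positivity
  filter_upwards [eventually_ge_atTop 3,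
    hlog.eventually_ge_atTop (max 4 (max (d * d) ((w * w) * (w * w))))] with n hn3 hnL
  set L := Real.log n with hL
  have hL4 : 4 ≤ L := le_trans (le_max_left _ _) hnL
  have hLd : d * d ≤ L := le_trans (le_trans (le_max_left _ _) (le_max_right _ _)) hnL
  have hLw : (w * w) * (w * w) ≤ L := le_trans (le_trans (le_max_right _ _) (le_max_right _ _)) hnL
  have hL0 : 0 < L := by linarith
  clear_value L
  set v := Real.sqrt L with hv
  set u := Real.sqrt v with hu
  have hv0 : 0 ≤ v := Real.sqrt_nonneg _
  have hvv : v * v = L := Real.mul_self_sqrt hL0.le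
  have huu : u * u = v := Real.mul_self_sqrt hv0
  clear_value u
  have hv2 : 2 ≤ v := by
    have : Real.sqrt 4 ≤ v := Real.sqrt_le_sqrt hL4
    rwa [show (4 : ℝ) = 2 * 2 by norm_num, Real.sqrt_mul_self (by norm_num)] at this
  have hu0' : 0 ≤ u := hu ▸ Real.sqrt_nonneg _
  have hu1 : 1 ≤ u := by nlinarith [huu, hv2, hu0']
  have hu0 : 0 < u := by linarith
  have hdv : d ≤ v := by
    rcases le_or_gt d 0 with hd | hd
    · linarith
    · calc d = Real.sqrt (d * d) := (Real.sqrt_mul_self hd.le).symm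
        _ ≤ v := Real.sqrt_le_sqrt hLd
  have hwu : w ≤ u := by
    rw [hu]
    calc w = Real.sqrt (w * w) := (Real.sqrt_mul_self hw0).symm
      _ ≤ Real.sqrt v := by
          refine Real.sqrt_le_sqrt ?_
          calc w * w = Real.sqrt ((w * w) * (w * w)) := (Real.sqrt_mul_self (by positivity)).symm
            _ ≤ v := Real.sqrt_le_sqrt hLw
  refine ⟨hn3, hdv, ?_⟩
  set K := ⌊v⌋₊ with hK
  have hKv : (K : ℝ) ≤ v := Nat.floor_le hv0
  clear_value K v
  -- log L = 4 log u ≤ 4 u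
  have hlogL : Real.log L ≤ 4 * u := by
    have h1 : Real.log L = 2 * Real.log v := by
      rw [← hvv, Real.log_mul (by linarith) (by linarith)]; ring
    have h2 : Real.log v = 2 * Real.log u := by
      rw [← huu, Real.log_mul (by linarith) (by linarith)]; ring
    have h3 : Real.log u ≤ u := le_trans (Real.log_le_sub_one_of_pos hu0) (by linarith)
    rw [h1, h2]; linarith
  -- key exponent inequality
  have hexp : ((2 * K + 3 : ℕ) : ℝ) * Real.log L ≤ η * L := by
    have h20u : 20 ≤ η * u := by
      rw [hw] at hwu
      calc (20 : ℝ) = η * (20 / η) := by field_simp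
        _ ≤ η * u := by nlinarith
    have hK3 : ((2 * K + 3 : ℕ) : ℝ) ≤ 4 * v := by push_cast; nlinarith
    have hlogL0 : 0 ≤ Real.log L := Real.log_nonneg (by linarith)
    calc ((2 * K + 3 : ℕ) : ℝ) * Real.log L ≤ (4 * v) * (4 * u) := by
          refine mul_le_mul hK3 hlogL hlogL0 (by nlinarith)
      _ ≤ η * L := by nlinarith
  -- assemble
  have hn0 : (0 : ℝ) < n := by positivity
  have hrpow : (n : ℝ) ^ η = Real.exp (η * L) := by
    rw [Real.rpow_def_of_pos hn0, hL, mul_comm]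
  have hL1 : (1 : ℝ) ≤ L := by linarith
  calc ((K : ℝ) + 1) * L ^ (2 * K + 2)
      ≤ L * L ^ (2 * K + 2) := by
        have h1 : (K : ℝ) + 1 ≤ L := by nlinarith [hKv, hv2, hvv]
        have hp : (0 : ℝ) ≤ L ^ (2 * K + 2) := by positivity
        exact mul_le_mul_of_nonneg_right h1 hp
    _ = L ^ (2 * K + 3) := by rw [pow_succ]; ring
    _ = Real.exp (((2 * K + 3 : ℕ) : ℝ) * Real.log L) := by
        rw [← Real.log_pow, Real.exp_log (by positivity)]
    _ ≤ Real.exp (η * L) := Real.exp_le_exp.mpr hexp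
    _ = (n : ℝ) ^ η := hrpow.symm

lemma lawB_eq (n : ℕ) (d : ℝ) : lawB n d = Measure.pi fun i : Fin n => Measure.pi fun j : Fin n =>
    bernoulliR (if (i : ℕ) + 1 ≤ n - ⌊(Real.log n) ^ 2⌋₊ ∧
      (j : ℕ) + 1 ≤ n - ⌊(Real.log n) ^ 2⌋₊ then d / n else Real.sqrt (Real.log n) / n) := by
  unfold lawB
  congr 1
  funext i
  congr 1
  funext j
  split_ifs <;> rfl

theorem diagonal_block_sum_bound (d : ℝ) (hd : 0 < d) (η : ℝ) (hη : 0 < η) :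
    ∃ N : ℕ, ∀ n : ℕ, N ≤ n →
      ENNReal.ofReal (1 - (n : ℝ) ^ (-1 + η)) ≤
        lawB n d
          {A | ∀ S : Finset (Fin n), (S.card : ℝ) ≤ Real.sqrt (Real.log n) →
            (∑ i ∈ S, ∑ j ∈ S, A i j) ≤ (S.card : ℝ)} := by
  obtain ⟨N, hN⟩ := eventually_atTop.mp (eventually_count d η hη)
  refine ⟨N, fun n hn => ?_⟩
  obtain ⟨hn3, hdr, hcount⟩ := hN n hn
  have hn0 : (0 : ℝ) < n := by positivity
  have hL1 : 1 < Real.log n := by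
    rw [Real.lt_log_iff_exp_lt hn0]
    calc Real.exp 1 < 2.7182818286 := Real.exp_one_lt_d9
      _ ≤ 3 := by norm_num
      _ ≤ (n : ℝ) := by exact_mod_cast hn3
  have hL0 : (0 : ℝ) < Real.log n := by linarith
  have hr0 : (0 : ℝ) ≤ Real.sqrt (Real.log n) := Real.sqrt_nonneg _
  have hrr : Real.sqrt (Real.log n) * Real.sqrt (Real.log n) = Real.log n :=
    Real.mul_self_sqrt hL0.le
  have hrL : Real.sqrt (Real.log n) ≤ Real.log n := by
    calc Real.sqrt (Real.log n) ≤ Real.sqrt (Real.log n * Real.log n) :=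
          Real.sqrt_le_sqrt (by nlinarith)
      _ = Real.log n := Real.sqrt_mul_self hL0.le
  have hLn : Real.log n ≤ (n : ℝ) :=
    le_trans (Real.log_le_sub_one_of_pos hn0) (by linarith)
  have hrn : Real.sqrt (Real.log n) / n ≤ 1 := by
    rw [div_le_one hn0]; linarith
  set P : Fin n → Fin n → ℝ := fun i j =>
    if (i : ℕ) + 1 ≤ n - ⌊(Real.log n) ^ 2⌋₊ ∧ (j : ℕ) + 1 ≤ n - ⌊(Real.log n) ^ 2⌋₊ then
      d / n else Real.sqrt (Real.log n) / n with hPdef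
  have hq : ∀ i j, P i j ≤ Real.sqrt (Real.log n) / n := by
    intro i j
    simp only [hPdef]
    split_ifs
    · gcongr
    · exact le_rfl
  have hP0 : ∀ i j, 0 ≤ P i j := by
    intro i j
    simp only [hPdef]
    split_ifs <;> positivity
  have hP1 : ∀ i j, P i j ≤ 1 := fun i j => le_trans (hq i j) hrn
  -- instances
  haveI hbern : ∀ i j, IsProbabilityMeasure (bernoulliR (P i j)) :=
    fun i j => bern_prob (hP0 i j) (hP1 i j)
  have hprob : lawB n d Set.univ = 1 := by
    rw [lawB_eq n d]
    haveI : ∀ i : Fin n, IsProbabilityMeasure (Measure.pi fun j : Fin n => bernoulliR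
        (if (i : ℕ) + 1 ≤ n - ⌊(Real.log n) ^ 2⌋₊ ∧ (j : ℕ) + 1 ≤ n - ⌊(Real.log n) ^ 2⌋₊
          then d / n else Real.sqrt (Real.log n) / n)) := fun i => by
      haveI := fun j : Fin n => hbern i j
      infer_instance
    exact measure_univ
  -- numeric bound hypothesis
  set K := ⌊Real.sqrt (Real.log n)⌋₊ with hKdef
  have hc : ∀ k ≤ K, (n.choose k : ℝ) * (((k * k).choose (k + 1)) : ℝ) *
      (Real.sqrt (Real.log n) / n) ^ (k + 1) ≤ (Real.log n) ^ (2 * K + 2) / n := by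
    intro k hk
    have hkr : (k : ℝ) ≤ Real.sqrt (Real.log n) :=
      le_trans (Nat.cast_le.mpr hk) (Nat.floor_le hr0)
    have h1 : (n.choose k : ℝ) ≤ (n : ℝ) ^ k := by
      exact_mod_cast Nat.choose_le_pow n k
    have h2 : (((k * k).choose (k + 1)) : ℝ) ≤ (Real.log n) ^ (k + 1) := by
      calc (((k * k).choose (k + 1)) : ℝ) ≤ ((k * k : ℕ) : ℝ) ^ (k + 1) := by
            exact_mod_cast Nat.choose_le_pow (k * k) (k + 1)
        _ ≤ (Real.log n) ^ (k + 1) := by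
            refine pow_le_pow_left₀ (by positivity) ?_ _
            push_cast
            nlinarith
    have h3 : (Real.sqrt (Real.log n) / n) ^ (k + 1) ≤ (Real.log n / n) ^ (k + 1) := by
      gcongr
    calc (n.choose k : ℝ) * (((k * k).choose (k + 1)) : ℝ) *
        (Real.sqrt (Real.log n) / n) ^ (k + 1)
        ≤ (n : ℝ) ^ k * (Real.log n) ^ (k + 1) * (Real.log n / n) ^ (k + 1) := by
          refine mul_le_mul (mul_le_mul h1 h2 (by positivity) (by positivity)) h3
            (by positivity) (by positivity)
      _ = (Real.log n) ^ (2 * k + 2) / n := by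
          rw [div_pow]
          field_simp
          try ring
      _ ≤ (Real.log n) ^ (2 * K + 2) / n := by
          gcongr
          all_goals first | linarith | omega
  -- apply bad_le
  have hbad : lawB n d
      {A | ∀ S : Finset (Fin n), (S.card : ℝ) ≤ Real.sqrt (Real.log n) →
        (∑ i ∈ S, ∑ j ∈ S, A i j) ≤ (S.card : ℝ)}ᶜ ≤
      (K + 1) * ENNReal.ofReal ((Real.log n) ^ (2 * K + 2) / n) := by
    rw [lawB_eq n d]
    exact bad_le P hP0 hP1 (Real.sqrt (Real.log n) / n) (by positivity) hq
      (Real.sqrt (Real.log n)) _ hc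
  have hub : lawB n d
      {A | ∀ S : Finset (Fin n), (S.card : ℝ) ≤ Real.sqrt (Real.log n) →
        (∑ i ∈ S, ∑ j ∈ S, A i j) ≤ (S.card : ℝ)}ᶜ ≤
      ENNReal.ofReal ((n : ℝ) ^ (-1 + η)) := by
    refine le_trans hbad ?_
    have e1 : ((K : ℝ≥0∞) + 1) = ENNReal.ofReal ((K : ℝ) + 1) := by
      rw [ENNReal.ofReal_add (by positivity) zero_le_one, ENNReal.ofReal_natCast,
        ENNReal.ofReal_one]
    rw [e1, ← ENNReal.ofReal_mul (by positivity)]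
    refine ENNReal.ofReal_le_ofReal ?_
    have e2 : (n : ℝ) ^ (-1 + η) = (n : ℝ) ^ η / n := by
      rw [Real.rpow_add hn0, Real.rpow_neg_one]
      ring
    rw [e2]
    calc ((K : ℝ) + 1) * ((Real.log n) ^ (2 * K + 2) / n)
        = ((K : ℝ) + 1) * (Real.log n) ^ (2 * K + 2) / n := by ring
      _ ≤ (n : ℝ) ^ η / n := by gcongr
  -- conclude
  set Good := {A : Fin n → Fin n → ℝ | ∀ S : Finset (Fin n),
    (S.card : ℝ) ≤ Real.sqrt (Real.log n) →
    (∑ i ∈ S, ∑ j ∈ S, A i j) ≤ (S.card : ℝ)} with hGood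
  have h1 : (1 : ℝ≥0∞) ≤ lawB n d Good + lawB n d Goodᶜ := by
    rw [← hprob, ← Set.union_compl_self Good]
    exact measure_union_le _ _
  calc ENNReal.ofReal (1 - (n : ℝ) ^ (-1 + η))
      = 1 - ENNReal.ofReal ((n : ℝ) ^ (-1 + η)) := by
        rw [ENNReal.ofReal_sub _ (Real.rpow_nonneg hn0.le _), ENNReal.ofReal_one]
    _ ≤ 1 - lawB n d Goodᶜ := tsub_le_tsub_left hub 1
    _ ≤ lawB n d Good := tsub_le_iff_right.mpr h1
end

section
/- Let M be an n×m complex matrix and let M′ be the (n+1)×m matrix obtained from M by appending the row X ∈ ℂ^m. Let v_1, …, v_m be an orthonormal basis of ℂ^m consisting of eigenvectors of M†M with M†M v_i = σ_i(M)² v_i for each i. Then for every x ∈ ℂ, det( (M′)†M′ − x·I_m ) = ∏_{i=1}^m (σ_i(M)² − x) + Σ_{i=1}^m |⟨v_i, X†⟩|² · ∏_{j ≠ i} (σ_j(M)² − x). In particular, the squares of the singular values of M′ are exactly the roots of the right-hand side polynomial in x. -/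
open Matrix

/-- The standard Hermitian inner product on `ℂ^m` (conjugate-linear in the first variable). -/
noncomputable def cInner {m : ℕ} (x y : Fin m → ℂ) : ℂ :=
  ∑ j, starRingEnd ℂ (x j) * y j

/-- The `(n+1) × m` matrix obtained from an `n × m` matrix `M` by appending the row `X`. -/
def appendRow {n m : ℕ} (M : Matrix (Fin n) (Fin m) ℂ) (X : Fin m → ℂ) :
    Matrix (Fin (n + 1)) (Fin m) ℂ :=
  Matrix.of fun i j => if h : (i : ℕ) < n then M ⟨(i : ℕ), h⟩ j else X j

/-! ### Auxiliary lemmas -/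

lemma det_updateRow_sum_gen {m : ℕ} {ι : Type*} (A : Matrix (Fin m) (Fin m) ℂ) (i : Fin m)
    (t : Finset ι) (u : ι → Fin m → ℂ) :
    (A.updateRow i (∑ k ∈ t, u k)).det = ∑ k ∈ t, (A.updateRow i (u k)).det := by
  classical
  induction t using Finset.induction_on with
  | empty =>
      simp only [Finset.sum_empty]
      exact Matrix.det_eq_zero_of_row_eq_zero i (by simp)
  | insert _ _ hk ih =>
      rw [Finset.sum_insert hk, Matrix.det_updateRow_add, ih, Finset.sum_insert hk]

lemma det_updateRow_diagonal {m : ℕ} (d : Fin m → ℂ) (i : Fin m) (b : Fin m → ℂ) :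
    ((Matrix.diagonal d).updateRow i b).det = b i * ∏ j ∈ Finset.univ.erase i, d j := by
  classical
  have hb : b = ∑ k : Fin m, b k • (Pi.single k 1 : Fin m → ℂ) := by
    funext j; simp [Pi.single_apply]
  rw [hb, det_updateRow_sum_gen]
  rw [Finset.sum_eq_single i]
  · have hdiag : (Matrix.diagonal d).updateRow i (Pi.single i 1)
        = Matrix.diagonal (Function.update d i 1) := by
      ext j l
      by_cases hj : j = i
      · subst hj
        simp [Matrix.updateRow_self, Pi.single_apply, Matrix.diagonal_apply,
          Function.update_apply, eq_comm]
      · simp [Matrix.updateRow_ne hj, Matrix.diagonal_apply, Function.update_apply, hj]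
    rw [Matrix.det_updateRow_smul, hdiag, Matrix.det_diagonal]
    conv_rhs => rw [← hb]
    congr 1
    rw [← Finset.mul_prod_erase _ _ (Finset.mem_univ i), Function.update_self, one_mul]
    exact Finset.prod_congr rfl fun j hj =>
      Function.update_of_ne (Finset.ne_of_mem_erase hj) _ _
  · intro k _ hk
    rw [Matrix.det_updateRow_smul]
    have : ((Matrix.diagonal d).updateRow i (Pi.single k 1)).det = 0 := by
      apply Matrix.det_eq_zero_of_column_eq_zero i
      intro j
      by_cases hj : j = i
      · subst hj
        simp [Matrix.updateRow_self, Pi.single_apply, (Ne.symm hk)]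
      · simp [Matrix.updateRow_ne hj, Matrix.diagonal_apply, hj]
    simp [this]
  · simp

lemma det_diagonal_add_vecMulVec {m : ℕ} (d a b : Fin m → ℂ) :
    (Matrix.diagonal d + Matrix.vecMulVec a b).det
      = ∏ i, d i + ∑ i, a i * b i * ∏ j ∈ Finset.univ.erase i, d j := by
  classical
  set f := (Matrix.detRowAlternating : (Fin m → ℂ) [⋀^Fin m]→ₗ[ℂ] ℂ) with hf
  set g : Fin m → Fin m → ℂ := Matrix.diagonal d with hg
  set h : Fin m → Fin m → ℂ := Matrix.vecMulVec a b with hh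
  have hdet : (Matrix.diagonal d + Matrix.vecMulVec a b).det = f (g + h) := rfl
  have hexp : f (g + h) = ∑ s : Finset (Fin m), f (s.piecewise g h) :=
    f.toMultilinearMap.map_add_univ g h
  set F : Finset (Fin m) → ℂ := fun s => f (s.piecewise g h) with hF
  have claim1 : ∀ s : Finset (Fin m), ∀ i j : Fin m, i ≠ j → i ∉ s → j ∉ s → F s = 0 := by
    intro s i j hij hi hj
    set w : Fin m → Fin m → ℂ := s.piecewise g h with hw
    have hvi : w i = a i • b := by
      funext l
      rw [hw, Finset.piecewise_eq_of_notMem _ _ _ hi]; simp [hh, Matrix.vecMulVec_apply]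
    have hvj : w j = a j • b := by
      funext l
      rw [hw, Finset.piecewise_eq_of_notMem _ _ _ hj]; simp [hh, Matrix.vecMulVec_apply]
    have h1 : F s = a i • f (Function.update w i b) := by
      have : F s = f (Function.update w i (a i • b)) := by
        rw [hF]
        congr 1
        rw [← hvi, Function.update_eq_self]
      rw [this, AlternatingMap.map_update_smul]
    have h2 : f (Function.update w i b)
        = a j • f (Function.update (Function.update w i b) j b) := by
      have hj' : Function.update w i b j = a j • b := by
        rw [Function.update_of_ne (Ne.symm hij)]; exact hvj
      conv_lhs => rw [← Function.update_eq_self j (Function.update w i b), hj']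
      rw [AlternatingMap.map_update_smul]
    have h3 : f (Function.update (Function.update w i b) j b) = 0 := by
      apply AlternatingMap.map_eq_zero_of_eq _ _ (i := i) (j := j) _ hij
      rw [Function.update_of_ne hij, Function.update_self, Function.update_self]
    rw [h1, h2, h3, smul_zero, smul_zero]
  have claim2 : F Finset.univ = ∏ i, d i := by
    show f (Finset.univ.piecewise g h) = _
    rw [Finset.piecewise_univ]
    exact Matrix.det_diagonal
  have claim3 : ∀ i : Fin m, F (Finset.univ.erase i)
      = a i * b i * ∏ j ∈ Finset.univ.erase i, d j := by
    intro i
    have hpw : (Finset.univ.erase i).piecewise g h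
        = (Matrix.diagonal d).updateRow i (Matrix.vecMulVec a b i) := by
      funext j
      by_cases hj : j = i
      · subst hj
        rw [Finset.piecewise_eq_of_notMem _ _ _ (Finset.notMem_erase j _)]
        simp [Matrix.updateRow_self, hh]
      · rw [Finset.piecewise_eq_of_mem _ _ _ (Finset.mem_erase.mpr ⟨hj, Finset.mem_univ j⟩)]
        simp [Matrix.updateRow_ne hj, hg]
    show f _ = _
    rw [hpw]
    have : f ((Matrix.diagonal d).updateRow i (Matrix.vecMulVec a b i))
        = ((Matrix.diagonal d).updateRow i (Matrix.vecMulVec a b i)).det := rfl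
    rw [this, det_updateRow_diagonal]
    simp [Matrix.vecMulVec_apply]
  set T : Finset (Finset (Fin m)) :=
    insert Finset.univ (Finset.univ.image fun i : Fin m => Finset.univ.erase i) with hT
  have hzero : ∀ s ∈ (Finset.univ : Finset (Finset (Fin m))), s ∉ T → F s = 0 := by
    intro s _ hs
    rw [hT, Finset.mem_insert] at hs
    push_neg at hs
    obtain ⟨hs1, hs2⟩ := hs
    have hi : ∃ i : Fin m, i ∉ s := by
      by_contra hc
      push_neg at hc
      exact hs1 (Finset.eq_univ_iff_forall.mpr hc)
    obtain ⟨i, hi⟩ := hi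
    have hsub : s ⊆ Finset.univ.erase i := fun x hx =>
      Finset.mem_erase.mpr ⟨fun hxi => hi (hxi ▸ hx), Finset.mem_univ x⟩
    have hne : s ≠ Finset.univ.erase i := by
      intro hc
      exact (Finset.mem_image.not.mp fun hmem => hs2 hmem)
        ⟨i, Finset.mem_univ i, hc.symm⟩
    obtain ⟨j, hj1, hj2⟩ := Finset.exists_of_ssubset (lt_of_le_of_ne hsub hne)
    exact claim1 s j i (Finset.mem_erase.mp hj1).1 hj2 hi
  have hnotmem : (Finset.univ : Finset (Fin m)) ∉
      Finset.univ.image fun i : Fin m => Finset.univ.erase i := by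
    intro hc
    obtain ⟨i, _, hi⟩ := Finset.mem_image.mp hc
    have : i ∈ Finset.univ.erase i := hi.symm ▸ Finset.mem_univ i
    exact Finset.notMem_erase i _ this
  have hinj : ∀ i ∈ (Finset.univ : Finset (Fin m)), ∀ j ∈ (Finset.univ : Finset (Fin m)),
      Finset.univ.erase i = Finset.univ.erase j → i = j := by
    intro i _ j _ hij
    by_contra hne
    have : i ∈ Finset.univ.erase j := Finset.mem_erase.mpr ⟨hne, Finset.mem_univ i⟩
    rw [← hij] at this
    exact Finset.notMem_erase i _ this
  calc (Matrix.diagonal d + Matrix.vecMulVec a b).det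
      = ∑ s : Finset (Fin m), F s := by rw [hdet, hexp]
    _ = ∑ s ∈ T, F s := (Finset.sum_subset (Finset.subset_univ T) hzero).symm
    _ = F Finset.univ + ∑ i : Fin m, F (Finset.univ.erase i) := by
        rw [hT, Finset.sum_insert hnotmem, Finset.sum_image hinj]
    _ = _ := by rw [claim2]; congr 1; exact Finset.sum_congr rfl fun i _ => claim3 i

def finEmb (m : ℕ) : Fin m ↪ ℕ :=
  ⟨fun k => (k : ℕ) + 1, fun a b hab => Fin.ext (by simpa using hab)⟩

lemma Icc_eq_map (m : ℕ) : Finset.Icc 1 m = Finset.map (finEmb m) Finset.univ := by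
  ext i
  simp only [Finset.mem_Icc, Finset.mem_map, Finset.mem_univ, true_and, finEmb,
    Function.Embedding.coeFn_mk]
  constructor
  · rintro ⟨h1, h2⟩
    exact ⟨⟨i - 1, by omega⟩, by show (i - 1) + 1 = i; omega⟩
  · rintro ⟨k, rfl⟩
    exact ⟨by show 1 ≤ (k : ℕ) + 1; omega, by show (k : ℕ) + 1 ≤ m; have := k.isLt; omega⟩

lemma prod_Icc_fin (m : ℕ) (f : ℕ → ℂ) :
    ∏ i ∈ Finset.Icc 1 m, f i = ∏ k : Fin m, f ((k : ℕ) + 1) := by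
  rw [Icc_eq_map, Finset.prod_map]; rfl

lemma sum_Icc_fin (m : ℕ) (f : ℕ → ℂ) :
    ∑ i ∈ Finset.Icc 1 m, f i = ∑ k : Fin m, f ((k : ℕ) + 1) := by
  rw [Icc_eq_map, Finset.sum_map]; rfl

lemma prod_Icc_erase_fin (m : ℕ) (f : ℕ → ℂ) (k : Fin m) :
    ∏ j ∈ (Finset.Icc 1 m).erase ((k : ℕ) + 1), f j
      = ∏ j ∈ Finset.univ.erase k, f ((j : ℕ) + 1) := by
  rw [Icc_eq_map]
  rw [show ((k : ℕ) + 1) = finEmb m k from rfl, ← Finset.map_erase, Finset.prod_map]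
  rfl

lemma appendRow_gram {n m : ℕ} (M : Matrix (Fin n) (Fin m) ℂ) (X : Fin m → ℂ) :
    (appendRow M X)ᴴ * appendRow M X
      = Mᴴ * M + Matrix.vecMulVec (fun j => starRingEnd ℂ (X j)) X := by
  ext j k
  simp only [Matrix.mul_apply, Matrix.conjTranspose_apply, Matrix.add_apply,
    Matrix.vecMulVec_apply, appendRow, Matrix.of_apply]
  rw [Fin.sum_univ_castSucc]
  congr 1
  · apply Finset.sum_congr rfl
    intro i _
    have h : ((Fin.castSucc i : Fin (n+1)) : ℕ) < n := by simp [i.isLt]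
    have h2 : (⟨((Fin.castSucc i : Fin (n+1)) : ℕ), h⟩ : Fin n) = i := Fin.ext rfl
    rw [dif_pos h, dif_pos h, h2]
  · rw [RCLike.star_def]
    simp

lemma mul_vecMulVec {m : ℕ} (A : Matrix (Fin m) (Fin m) ℂ) (w v : Fin m → ℂ) :
    A * Matrix.vecMulVec w v = Matrix.vecMulVec (A.mulVec w) v := by
  ext i j
  simp [Matrix.mul_apply, Matrix.vecMulVec_apply, Matrix.mulVec, dotProduct,
    Finset.sum_mul, mul_assoc]

lemma vecMulVec_mul {m : ℕ} (A : Matrix (Fin m) (Fin m) ℂ) (w v : Fin m → ℂ) :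
    Matrix.vecMulVec w v * A = Matrix.vecMulVec w (Matrix.vecMul v A) := by
  ext i j
  simp [Matrix.mul_apply, Matrix.vecMulVec_apply, Matrix.vecMul, dotProduct,
    Finset.mul_sum, mul_assoc]

lemma conj_mul_self_eq_norm_sq (z : ℂ) : starRingEnd ℂ z * z = ((‖z‖ : ℂ))^2 := by
  rw [mul_comm, Complex.mul_conj, Complex.normSq_eq_norm_sq]
  push_cast
  ring

theorem charpoly_after_row_addition (n m : ℕ)
    (M : Matrix (Fin n) (Fin m) ℂ) (X : Fin m → ℂ)
    (σ : ℕ → ℝ) (v : ℕ → Fin m → ℂ)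
    (hσ0 : ∀ i ∈ Finset.Icc 1 m, 0 ≤ σ i)
    (hσmono : ∀ i ∈ Finset.Icc 1 m, ∀ j ∈ Finset.Icc 1 m, i ≤ j → σ j ≤ σ i)
    (hON : ∀ i ∈ Finset.Icc 1 m, ∀ j ∈ Finset.Icc 1 m,
      cInner (v i) (v j) = if i = j then 1 else 0)
    (heig : ∀ i ∈ Finset.Icc 1 m,
      (Mᴴ * M).mulVec (v i) = (((σ i : ℂ)) ^ 2) • v i) :
    ∀ x : ℂ,
      ((appendRow M X)ᴴ * appendRow M X - x • 1).det =
        (∏ i ∈ Finset.Icc 1 m, ((σ i : ℂ) ^ 2 - x)) +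
          ∑ i ∈ Finset.Icc 1 m,
            ((‖cInner (v i) (fun j => starRingEnd ℂ (X j))‖ : ℂ)) ^ 2 *
              ∏ j ∈ (Finset.Icc 1 m).erase i, ((σ j : ℂ) ^ 2 - x) := by
  classical
  intro x
  have mem : ∀ k : Fin m, (k : ℕ) + 1 ∈ Finset.Icc 1 m := by
    intro k
    simp only [Finset.mem_Icc]
    exact ⟨by omega, by omega⟩
  set P : Matrix (Fin m) (Fin m) ℂ := Matrix.of fun j k => v ((k : ℕ) + 1) j with hP
  set dd : Fin m → ℂ := fun k => ((σ ((k : ℕ) + 1) : ℂ)) ^ 2 with hdd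
  set c : Fin m → ℂ := fun k => ∑ j, X j * v ((k : ℕ) + 1) j with hc
  have hPP : Pᴴ * P = 1 := by
    ext i k
    rw [Matrix.mul_apply]
    have h := hON ((i : ℕ) + 1) (mem i) ((k : ℕ) + 1) (mem k)
    have e : (∑ j, Pᴴ i j * P j k) = cInner (v ((i : ℕ) + 1)) (v ((k : ℕ) + 1)) := rfl
    rw [e, h, Matrix.one_apply]
    by_cases hik : i = k
    · simp [hik]
    · rw [if_neg hik, if_neg (by simpa [Fin.ext_iff] using hik)]
  have hAP : Mᴴ * M * P = P * Matrix.diagonal dd := by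
    ext j k
    have h := congrFun (heig ((k : ℕ) + 1) (mem k)) j
    simp only [Matrix.mulVec, dotProduct, Pi.smul_apply, smul_eq_mul] at h
    rw [Matrix.mul_apply, Matrix.mul_diagonal]
    calc (∑ l, (Mᴴ * M) j l * P l k) = ∑ l, (Mᴴ * M) j l * v ((k : ℕ) + 1) l := rfl
      _ = ((σ ((k : ℕ) + 1) : ℂ)) ^ 2 * v ((k : ℕ) + 1) j := h
      _ = P j k * dd k := by rw [hdd]; show _ = v ((k : ℕ) + 1) j * _; ring
  have hdet1 : Pᴴ.det * P.det = 1 := by rw [← Matrix.det_mul, hPP, Matrix.det_one]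
  have key : ∀ B : Matrix (Fin m) (Fin m) ℂ, (Pᴴ * B * P).det = B.det := by
    intro B
    rw [Matrix.det_mul, Matrix.det_mul]
    linear_combination B.det * hdet1
  have hleft : Pᴴ.mulVec (fun j => starRingEnd ℂ (X j)) = fun k => starRingEnd ℂ (c k) := by
    funext k
    rw [hc]
    simp only [Matrix.mulVec, dotProduct, Matrix.conjTranspose_apply, hP,
      Matrix.of_apply, map_sum]
    exact Finset.sum_congr rfl fun j _ => by
      rw [RCLike.star_def, _root_.map_mul]; ring
  have hright : Matrix.vecMul X P = c := by
    funext k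
    rw [hc]
    simp only [Matrix.vecMul, dotProduct, hP, Matrix.of_apply]
  have hPVP : Pᴴ * Matrix.vecMulVec (fun j => starRingEnd ℂ (X j)) X * P
      = Matrix.vecMulVec (fun k => starRingEnd ℂ (c k)) c := by
    rw [_root_.mul_vecMulVec, _root_.vecMulVec_mul, hleft, hright]
  have e1 : Pᴴ * (Mᴴ * M) * P = Matrix.diagonal dd := by
    rw [Matrix.mul_assoc, hAP, ← Matrix.mul_assoc, hPP, Matrix.one_mul]
  have e2 : Pᴴ * (x • (1 : Matrix (Fin m) (Fin m) ℂ)) * P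
      = x • (1 : Matrix (Fin m) (Fin m) ℂ) := by
    rw [Matrix.mul_smul, Matrix.mul_one, Matrix.smul_mul, hPP]
  have main : Pᴴ * ((appendRow M X)ᴴ * appendRow M X - x • 1) * P
      = Matrix.diagonal (fun k => dd k - x)
        + Matrix.vecMulVec (fun k => starRingEnd ℂ (c k)) c := by
    rw [appendRow_gram]
    rw [Matrix.mul_sub, Matrix.sub_mul, Matrix.mul_add, Matrix.add_mul, e1, e2, hPVP]
    have hds : Matrix.diagonal dd - x • (1 : Matrix (Fin m) (Fin m) ℂ)
        = Matrix.diagonal (fun k => dd k - x) := by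
      rw [Matrix.smul_one_eq_diagonal, ← Matrix.diagonal_sub]
    rw [← hds]
    abel
  rw [← key ((appendRow M X)ᴴ * appendRow M X - x • 1), main, det_diagonal_add_vecMulVec]
  rw [prod_Icc_fin, sum_Icc_fin]
  congr 1
  apply Finset.sum_congr rfl
  intro k _
  rw [prod_Icc_erase_fin]
  have hcV : cInner (v ((k : ℕ) + 1)) (fun j => starRingEnd ℂ (X j))
      = starRingEnd ℂ (c k) := by
    rw [hc]
    simp only [cInner, map_sum]
    exact Finset.sum_congr rfl fun j _ => by rw [_root_.map_mul]; ring
  rw [hcV, conj_mul_self_eq_norm_sq, RCLike.norm_conj]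
end

section
/- There exists an absolute constant C > 0 such that the following holds. Let n be a positive integer, let λ_1, …, λ_n ∈ ℂ, let τ > 0, and define S_τ = { z ∈ ℂ : ∏_{i=1}^n |λ_i − z| ≤ exp(−τn) }. Then the Lebesgue measure of S_τ satisfies μ(S_τ) ≤ C·exp(−C^{−1} τ). -/
open MeasureTheory Set
open scoped NNReal ENNReal

/-- The key potential-theoretic integral bound: the integral over all of `ℂ` of the
truncated logarithmic kernel `max 0 (log r - log ‖lam - z‖)` is at most `π r² / 2`. -/
lemma aux_log_kernel_integral (lam : ℂ) {r : ℝ} (hr : 0 < r) :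
    (∫⁻ z : ℂ, ENNReal.ofReal (max 0 (Real.log r - Real.log ‖lam - z‖))) ≤
      ENNReal.ofReal (Real.pi * r ^ 2 / 2) := by
  have hmble : Measurable fun z : ℂ => max 0 (Real.log r - Real.log ‖lam - z‖) := by
    apply measurable_const.max
    exact measurable_const.sub
      (Real.measurable_log.comp ((continuous_const.sub continuous_id).norm.measurable))
  rw [lintegral_eq_lintegral_meas_lt (f := fun z : ℂ => max 0 (Real.log r - Real.log ‖lam - z‖))
    volume (Filter.Eventually.of_forall fun z => le_max_left _ _) hmble.aemeasurable]
  have hsub : ∀ t ∈ Ioi (0 : ℝ),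
      {z : ℂ | t < max 0 (Real.log r - Real.log ‖lam - z‖)} ⊆
        Metric.ball lam (r * Real.exp (-t)) := by
    intro t ht z hz
    simp only [mem_setOf_eq] at hz
    have htpos : (0 : ℝ) < t := ht
    have h2 : t < Real.log r - Real.log ‖lam - z‖ := by
      rcases lt_max_iff.1 hz with h | h
      · linarith
      · exact h
    rw [Metric.mem_ball, dist_eq_norm, ← norm_neg, neg_sub]
    by_cases hd : ‖lam - z‖ = 0
    · rw [hd]; positivity
    · have hd' : 0 < ‖lam - z‖ := (norm_nonneg _).lt_of_ne (Ne.symm hd)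
      have h3 : t < Real.log (r / ‖lam - z‖) := by
        rw [Real.log_div hr.ne' hd]; exact h2
      have h4 : Real.exp t < r / ‖lam - z‖ :=
        (Real.lt_log_iff_exp_lt (div_pos hr hd')).1 h3
      have h5 : Real.exp t * ‖lam - z‖ < r := (lt_div_iff₀ hd').1 h4
      rw [Real.exp_neg, ← div_eq_mul_inv, lt_div_iff₀ (Real.exp_pos t)]
      nlinarith
  calc
    ∫⁻ t in Ioi (0 : ℝ), volume {z : ℂ | t < max 0 (Real.log r - Real.log ‖lam - z‖)}
        ≤ ∫⁻ t in Ioi (0 : ℝ),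
            ENNReal.ofReal (Real.pi * r ^ 2) * ENNReal.ofReal (Real.exp (-(2 * t))) := by
      refine lintegral_mono_ae ((ae_restrict_iff' measurableSet_Ioi).2
        (Filter.Eventually.of_forall fun t ht => ?_))
      refine le_trans (measure_mono (hsub t ht)) ?_
      rw [Complex.volume_ball]
      have hnn : (0 : ℝ) ≤ r * Real.exp (-t) := by positivity
      have hpi : ((NNReal.pi : ℝ≥0) : ℝ≥0∞) = ENNReal.ofReal Real.pi := by
        rw [← NNReal.coe_real_pi, ENNReal.ofReal_coe_nnreal]
      rw [hpi, ← ENNReal.ofReal_pow hnn, ← ENNReal.ofReal_mul (by positivity),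
        ← ENNReal.ofReal_mul (by positivity)]
      apply le_of_eq
      congr 1
      have hexp : Real.exp (-t) ^ 2 = Real.exp (-(2 * t)) := by
        rw [sq, ← Real.exp_add]; ring_nf
      rw [mul_pow, hexp]; ring
    _ = ENNReal.ofReal (Real.pi * r ^ 2) *
          ∫⁻ t in Ioi (0 : ℝ), ENNReal.ofReal (Real.exp (-(2 * t))) :=
      lintegral_const_mul' _ _ ENNReal.ofReal_ne_top
    _ ≤ ENNReal.ofReal (Real.pi * r ^ 2 / 2) := by
      have hint : IntegrableOn (fun t : ℝ => Real.exp (-(2 * t))) (Ioi 0) := by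
        simpa [neg_mul] using exp_neg_integrableOn_Ioi 0 (two_pos (α := ℝ))
      have hval : ∫⁻ t in Ioi (0 : ℝ), ENNReal.ofReal (Real.exp (-(2 * t)))
          = ENNReal.ofReal (1 / 2) := by
        rw [← ofReal_integral_eq_lintegral_ofReal hint
          (Filter.Eventually.of_forall fun t => (Real.exp_pos _).le)]
        congr 1
        calc (∫ t in Ioi (0 : ℝ), Real.exp (-(2 * t)))
            = (2 : ℝ)⁻¹ • ∫ x in Ioi (2 * (0 : ℝ)), Real.exp (-x) :=
              integral_comp_mul_left_Ioi (fun y => Real.exp (-y)) 0 two_pos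
          _ = 1 / 2 := by
              rw [mul_zero, integral_exp_neg_Ioi_zero, smul_eq_mul]; norm_num
      rw [hval, ← ENNReal.ofReal_mul (by positivity)]
      apply ENNReal.ofReal_le_ofReal
      rw [mul_one_div]

theorem log_potential_level_set_measure :
    ∃ C : ℝ, 0 < C ∧
      ∀ (n : ℕ), 0 < n → ∀ (lam : Fin n → ℂ) (τ : ℝ), 0 < τ →
        volume {z : ℂ | (∏ i, ‖lam i - z‖) ≤ Real.exp (-(τ * n))} ≤
          ENNReal.ofReal (C * Real.exp (-(τ / C))) := by
  refine ⟨11, by norm_num, fun n hn lam τ hτ => ?_⟩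
  set E : Set ℂ := {z : ℂ | (∏ i, ‖lam i - z‖) ≤ Real.exp (-(τ * n))} with hE_def
  have hF : Continuous fun z : ℂ => ∏ i, ‖lam i - z‖ :=
    continuous_finset_prod _ fun i _ => (continuous_const.sub continuous_id).norm
  have hEmeas : MeasurableSet E := (isClosed_le hF continuous_const).measurableSet
  -- E is contained in a finite union of closed balls, hence has finite measure
  have hsub : E ⊆ ⋃ i, Metric.closedBall (lam i) (Real.exp (-τ)) := by
    intro z hz
    by_contra hc
    simp only [mem_iUnion, Metric.mem_closedBall, not_exists, not_le] at hc
    have hlt : ∏ _i : Fin n, Real.exp (-τ) < ∏ i, ‖lam i - z‖ := by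
      refine Finset.prod_lt_prod_of_nonempty (fun i _ => Real.exp_pos _) (fun i _ => ?_)
        (Finset.univ_nonempty_iff.2 (Fin.pos_iff_nonempty.1 hn))
      have := hc i
      rwa [dist_eq_norm, ← norm_neg, neg_sub] at this
    have hEq : Real.exp (-(τ * n)) = Real.exp (-τ) ^ n := by
      rw [← Real.exp_nat_mul]; ring_nf
    rw [Finset.prod_const, Finset.card_univ, Fintype.card_fin] at hlt
    have hzE : (∏ i, ‖lam i - z‖) ≤ Real.exp (-(τ * n)) := hz
    rw [hEq] at hzE
    linarith
  have hfin : volume E ≠ ⊤ := by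
    have h1 : volume (⋃ i, Metric.closedBall (lam i) (Real.exp (-τ))) ≠ ⊤ := by
      refine ne_top_of_le_ne_top ?_ (measure_iUnion_le _)
      rw [tsum_fintype]
      exact ne_of_lt (ENNReal.sum_lt_top.2 fun i _ => measure_closedBall_lt_top)
    exact ne_top_of_le_ne_top h1 (measure_mono hsub)
  rcases eq_or_ne (volume E) 0 with h0 | h0
  · rw [h0]; exact zero_le
  have hm_pos : 0 < (volume E).toReal := ENNReal.toReal_pos h0 hfin
  set r : ℝ := Real.sqrt ((volume E).toReal / Real.pi) with hr_def
  have hr : 0 < r := Real.sqrt_pos.2 (div_pos hm_pos Real.pi_pos)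
  have hr2 : Real.pi * r ^ 2 = (volume E).toReal := by
    rw [hr_def, Real.sq_sqrt (le_of_lt (div_pos hm_pos Real.pi_pos))]
    field_simp
  -- the key claim
  have hkey : Real.log r + τ ≤ 1 / 2 := by
    set g : Fin n → ℂ → ℝ := fun i z => max 0 (Real.log r - Real.log ‖lam i - z‖) with hg_def
    have hgm : ∀ i : Fin n, Measurable fun z : ℂ => ENNReal.ofReal (g i z) := by
      intro i
      apply Measurable.ennreal_ofReal
      apply measurable_const.max
      exact measurable_const.sub
        (Real.measurable_log.comp ((continuous_const.sub continuous_id).norm.measurable))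
    have hNmeas : MeasurableSet (Set.range lam) := (Set.finite_range lam).measurableSet
    have hNnull : volume (Set.range lam) = 0 := (Set.finite_range lam).measure_zero volume
    have hE' : MeasurableSet (E \ Set.range lam) := hEmeas.diff hNmeas
    have hE'vol : volume (E \ Set.range lam) = volume E := measure_diff_null hNnull
    have hpoint : ∀ z ∈ E \ Set.range lam, (n : ℝ) * (Real.log r + τ) ≤ ∑ i, g i z := by
      intro z hz
      obtain ⟨hzE, hzN⟩ := hz
      have hd : ∀ i, ‖lam i - z‖ ≠ 0 := fun i h =>
        hzN ⟨i, sub_eq_zero.mp (norm_eq_zero.mp h)⟩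
      have hdpos : ∀ i, 0 < ‖lam i - z‖ := fun i =>
        (norm_nonneg _).lt_of_ne (Ne.symm (hd i))
      have hprodpos : 0 < ∏ i, ‖lam i - z‖ := Finset.prod_pos fun i _ => hdpos i
      have hlog : ∑ i, Real.log ‖lam i - z‖ ≤ -(τ * n) := by
        rw [← Real.log_prod fun i _ => hd i]
        calc Real.log (∏ i, ‖lam i - z‖) ≤ Real.log (Real.exp (-(τ * n))) :=
              Real.log_le_log hprodpos hzE
          _ = -(τ * n) := Real.log_exp _
      have hsum1 : ∑ i, (Real.log r - Real.log ‖lam i - z‖) ≤ ∑ i, g i z :=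
        Finset.sum_le_sum fun i _ => le_max_right _ _
      have hsum2 : ∑ i, (Real.log r - Real.log ‖lam i - z‖)
          = (n : ℝ) * Real.log r - ∑ i, Real.log ‖lam i - z‖ := by
        rw [Finset.sum_sub_distrib, Finset.sum_const, Finset.card_univ, Fintype.card_fin,
          nsmul_eq_mul]
      nlinarith
    have key : volume E * ENNReal.ofReal ((n : ℝ) * (Real.log r + τ))
        ≤ volume E * ENNReal.ofReal ((n : ℝ) / 2) := by
      calc volume E * ENNReal.ofReal ((n : ℝ) * (Real.log r + τ))
          = ∫⁻ _ in E \ Set.range lam, ENNReal.ofReal ((n : ℝ) * (Real.log r + τ)) := by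
            rw [setLIntegral_const, hE'vol, mul_comm]
        _ ≤ ∫⁻ z in E \ Set.range lam, ENNReal.ofReal (∑ i, g i z) :=
            lintegral_mono_ae ((ae_restrict_iff' hE').2
              (Filter.Eventually.of_forall fun z hz =>
                ENNReal.ofReal_le_ofReal (hpoint z hz)))
        _ ≤ ∫⁻ z in E, ENNReal.ofReal (∑ i, g i z) := lintegral_mono_set diff_subset
        _ = ∫⁻ z in E, ∑ i, ENNReal.ofReal (g i z) := by
            refine lintegral_congr fun z => ?_
            exact ENNReal.ofReal_sum_of_nonneg fun i _ => le_max_left _ _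
        _ = ∑ i, ∫⁻ z in E, ENNReal.ofReal (g i z) :=
            lintegral_finset_sum' _ fun i _ => (hgm i).aemeasurable
        _ ≤ ∑ _i : Fin n, ENNReal.ofReal (Real.pi * r ^ 2 / 2) :=
            Finset.sum_le_sum fun i _ =>
              le_trans (setLIntegral_le_lintegral _ _) (aux_log_kernel_integral (lam i) hr)
        _ = volume E * ENNReal.ofReal ((n : ℝ) / 2) := by
            rw [Finset.sum_const, Finset.card_univ, Fintype.card_fin, nsmul_eq_mul, hr2]
            have h2 : (n : ℝ≥0∞) = ENNReal.ofReal (n : ℝ) := (ENNReal.ofReal_natCast n).symm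
            have h3 : (n : ℝ) * ((volume E).toReal / 2)
                = (volume E).toReal * ((n : ℝ) / 2) := by ring
            rw [h2, ← ENNReal.ofReal_mul (Nat.cast_nonneg n), h3,
              ENNReal.ofReal_mul ENNReal.toReal_nonneg, ENNReal.ofReal_toReal hfin]
    have key2 : (n : ℝ) * (Real.log r + τ) ≤ (n : ℝ) / 2 := by
      have h4 := (ENNReal.mul_le_mul_iff_right h0 hfin).1 key
      exact (ENNReal.ofReal_le_ofReal_iff (by positivity)).1 h4
    have hn' : (0 : ℝ) < n := by exact_mod_cast hn
    nlinarith
  -- conclude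
  have hr_le : r ≤ Real.exp (1 / 2 - τ) :=
    (Real.log_le_iff_le_exp hr).1 (by linarith)
  have hr2_le : r ^ 2 ≤ Real.exp (1 - 2 * τ) := by
    have h5 : Real.exp (1 / 2 - τ) ^ 2 = Real.exp (1 - 2 * τ) := by
      rw [sq, ← Real.exp_add]; ring_nf
    calc r ^ 2 ≤ Real.exp (1 / 2 - τ) ^ 2 := pow_le_pow_left₀ hr.le hr_le 2
      _ = Real.exp (1 - 2 * τ) := h5
  rw [← ENNReal.ofReal_toReal hfin]
  apply ENNReal.ofReal_le_ofReal
  have h6 : Real.exp (1 - 2 * τ) = Real.exp 1 * Real.exp (-(2 * τ)) := by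
    rw [← Real.exp_add]; ring_nf
  have hπe : Real.pi * Real.exp 1 ≤ 11 := by
    nlinarith [Real.pi_le_four, Real.exp_one_lt_d9, Real.exp_pos 1, Real.pi_pos]
  have hee : Real.exp (-(2 * τ)) ≤ Real.exp (-(τ / 11)) := Real.exp_le_exp.2 (by linarith)
  calc (volume E).toReal = Real.pi * r ^ 2 := hr2.symm
    _ ≤ Real.pi * Real.exp (1 - 2 * τ) := by nlinarith [Real.pi_pos]
    _ = Real.pi * Real.exp 1 * Real.exp (-(2 * τ)) := by rw [h6]; ring
    _ ≤ 11 * Real.exp (-(2 * τ)) := by nlinarith [Real.exp_pos (-(2 * τ))]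
    _ ≤ 11 * Real.exp (-(τ / 11)) := by linarith
end
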